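/- Let L be an N×N real matrix with 1^T L = 0 and L·1 = 0 and η^T L η ≥ 0 for all η ∈ ℝ^N (the Laplacian of a weight-balanced graph), and let M be an N×N diagonal matrix with strictly positive diagonal entries. Then every complex eigenvalue of the product L·M has nonnegative real part. -/
import Mathlib


open Matrix

/-- If L is an N×N real matrix with 1^T L = 0, L 1 = 0 and nonnegative
quadratic form, and M is diagonal with strictly positive diagonal entries, then every
complex eigenvalue of L * M has nonnegative real part. -/
theorem stmt_2 (N : ℕ) (L : Matrix (Fin N) (Fin N) ℝ) (d : Fin N → ℝ)
    (hrow : L.mulVec (fun _ => 1) = 0)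
    (hcol : Matrix.vecMul (fun _ => 1) L = 0)
    (hquad : ∀ η : Fin N → ℝ, 0 ≤ η ⬝ᵥ L.mulVec η)
    (hd : ∀ i, 0 < d i) :
    ∀ s ∈ spectrum ℂ ((L * Matrix.diagonal d).map (Complex.ofReal ·)), 0 ≤ s.re := by
  intro s hs
  rw [spectrum.mem_iff, Matrix.isUnit_iff_isUnit_det, isUnit_iff_ne_zero, not_not] at hs
  obtain ⟨v, hv0, hv⟩ := Matrix.exists_mulVec_eq_zero_iff.mpr hs
  have heig : ((L * Matrix.diagonal d).map (Complex.ofReal ·)).mulVec v = s • v := by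
    rw [Matrix.sub_mulVec, sub_eq_zero] at hv
    rw [← hv, Matrix.algebraMap_eq_diagonal]
    ext i
    simp [Matrix.mulVec_diagonal]
  set w : Fin N → ℂ := fun i => (d i : ℂ) * v i with hw
  have heig2 : (L.map (Complex.ofReal ·)).mulVec w = s • v := by
    funext k
    have h := congrFun heig k
    simp only [mulVec, dotProduct, Matrix.map_apply, Matrix.mul_apply, Matrix.diagonal_apply,
      mul_ite, mul_zero, Finset.sum_ite_eq', Finset.mem_univ, if_true, Pi.smul_apply,
      smul_eq_mul] at h ⊢
    rw [← h]
    refine Finset.sum_congr rfl fun j _ => ?_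
    simp only [hw]
    push_cast
    ring
  set x : Fin N → ℝ := fun i => (w i).re with hx
  set y : Fin N → ℝ := fun i => (w i).im with hy
  -- real part of the sesquilinear form
  have hre : ((star w) ⬝ᵥ ((L.map (Complex.ofReal ·)).mulVec w)).re
      = x ⬝ᵥ L.mulVec x + y ⬝ᵥ L.mulVec y := by
    simp only [dotProduct, mulVec, Pi.star_apply, Matrix.map_apply, Complex.re_sum]
    rw [← Finset.sum_add_distrib]
    refine Finset.sum_congr rfl fun i _ => ?_
    rw [Finset.mul_sum, Finset.mul_sum, Finset.mul_sum, Complex.re_sum, ← Finset.sum_add_distrib]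
    refine Finset.sum_congr rfl fun j _ => ?_
    simp only [hx, hy, RCLike.star_def, Complex.mul_re, Complex.mul_im, Complex.conj_re,
      Complex.conj_im, Complex.ofReal_re, Complex.ofReal_im]
    ring
  have hform : 0 ≤ ((star w) ⬝ᵥ ((L.map (Complex.ofReal ·)).mulVec w)).re := by
    rw [hre]; exact add_nonneg (hquad x) (hquad y)
  -- the right-hand side
  set c : ℝ := ∑ i, d i * Complex.normSq (v i) with hc
  have hdot : (star w) ⬝ᵥ v = (c : ℂ) := by
    simp only [dotProduct, Pi.star_apply, hw, hc, Complex.ofReal_sum]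
    refine Finset.sum_congr rfl fun i _ => ?_
    rw [star_mul', Complex.star_def, Complex.conj_ofReal, mul_assoc,
      mul_comm ((starRingEnd ℂ) (v i)) (v i), Complex.mul_conj, Complex.ofReal_mul]
  have hcpos : 0 < c := by
    obtain ⟨i, hi⟩ := Function.ne_iff.mp hv0
    refine Finset.sum_pos' (fun j _ => mul_nonneg (hd j).le (Complex.normSq_nonneg _)) ⟨i, Finset.mem_univ i, ?_⟩
    exact mul_pos (hd i) (by simpa [Complex.normSq_pos] using hi)
  have hS : ((star w) ⬝ᵥ ((L.map (Complex.ofReal ·)).mulVec w)) = s * (c : ℂ) := by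
    rw [heig2, dotProduct_smul, hdot, smul_eq_mul]
  have : 0 ≤ s.re * c := by
    have := hform
    rw [hS] at this
    simpa [Complex.mul_re, Complex.ofReal_re, Complex.ofReal_im] using this
  nlinarith
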